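/- Let β > 0, μ ≥ 0 and p ∈ ℕ. Then there exists a unique real number λ in the open interval (μ² + π²p²/4, μ² + π²(p+1)²/4) such that, writing s = √(λ − μ²), one has (β·sin s + s·cos s)·(β·cos s − s·sin s) = 0. -/

import Mathlib

open Real

lemma aux_sin (β s : ℝ) (hβ : 0 < β) :
    β * Real.sin s + s * Real.cos s
      = Real.sqrt (β ^ 2 + s ^ 2) * Real.sin (s + Real.arctan (s / β)) := by
  have hc : Real.sqrt (β ^ 2 + s ^ 2) = β * Real.sqrt (1 + (s / β) ^ 2) := by
    rw [← Real.sqrt_sq hβ.le, ← Real.sqrt_mul (by positivity)]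
    congr 1; field_simp
    rw [Real.sq_sqrt (sq_nonneg β)]
  have h1 : Real.sqrt (1 + (s / β) ^ 2) ≠ 0 := by positivity
  rw [Real.sin_add, Real.sin_arctan, Real.cos_arctan, hc]
  field_simp

lemma aux_cos (β s : ℝ) (hβ : 0 < β) :
    β * Real.cos s - s * Real.sin s
      = Real.sqrt (β ^ 2 + s ^ 2) * Real.cos (s + Real.arctan (s / β)) := by
  have hc : Real.sqrt (β ^ 2 + s ^ 2) = β * Real.sqrt (1 + (s / β) ^ 2) := by
    rw [← Real.sqrt_sq hβ.le, ← Real.sqrt_mul (by positivity)]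
    congr 1; field_simp
    rw [Real.sq_sqrt (sq_nonneg β)]
  have h1 : Real.sqrt (1 + (s / β) ^ 2) ≠ 0 := by positivity
  rw [Real.cos_add, Real.sin_arctan, Real.cos_arctan, hc]
  field_simp

lemma prod_eq (β s : ℝ) (hβ : 0 < β) :
    (β * Real.sin s + s * Real.cos s) * (β * Real.cos s - s * Real.sin s)
      = (β ^ 2 + s ^ 2) *
        (Real.sin (s + Real.arctan (s / β)) * Real.cos (s + Real.arctan (s / β))) := by
  rw [aux_sin β s hβ, aux_cos β s hβ]
  have h : Real.sqrt (β ^ 2 + s ^ 2) * Real.sqrt (β ^ 2 + s ^ 2) = β ^ 2 + s ^ 2 :=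
    Real.mul_self_sqrt (by positivity)
  linear_combination (Real.sin (s + Real.arctan (s / β)) * Real.cos (s + Real.arctan (s / β))) * h

lemma theta_mono (β : ℝ) (hβ : 0 < β) :
    StrictMono (fun s : ℝ => s + Real.arctan (s / β)) := by
  have : StrictMono (fun s : ℝ => Real.arctan (s / β)) := by
    intro x y hxy
    exact Real.arctan_strictMono (by gcongr)
  exact strictMono_id.add this

lemma zero_iff (β : ℝ) (hβ : 0 < β) (p : ℕ) (s : ℝ)
    (hs : s ∈ Set.Ioo ((p : ℝ) * π / 2) (((p : ℝ) + 1) * π / 2)) :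
    (β * Real.sin s + s * Real.cos s) * (β * Real.cos s - s * Real.sin s) = 0
      ↔ s + Real.arctan (s / β) = ((p : ℝ) + 1) * π / 2 := by
  have hs0 : 0 < s := lt_of_le_of_lt (by positivity) hs.1
  have hφ0 : 0 < Real.arctan (s / β) := by
    have := Real.arctan_strictMono (show (0:ℝ) < s / β by positivity)
    rwa [Real.arctan_zero] at this
  have hφ1 : Real.arctan (s / β) < π / 2 := Real.arctan_lt_pi_div_two _
  rw [prod_eq β s hβ]
  rw [mul_eq_zero]
  have hne : (β ^ 2 + s ^ 2) ≠ 0 := by positivity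
  constructor
  · rintro (h | h)
    · exact absurd h hne
    · have h2 : Real.sin (2 * (s + Real.arctan (s / β))) = 0 := by
        rw [Real.sin_two_mul]; linarith [h]
      rw [Real.sin_eq_zero_iff] at h2
      obtain ⟨n, hn⟩ := h2
      have hlo : (p : ℝ) * π < (n : ℝ) * π := by
        rw [hn]; nlinarith [hs.1, hφ0]
      have hhi : (n : ℝ) * π < ((p : ℝ) + 2) * π := by
        rw [hn]; nlinarith [hs.2, hφ1]
      have h1 : (p : ℝ) < n := lt_of_mul_lt_mul_right (by linarith) Real.pi_pos.le
      have h2' : (n : ℝ) < (p : ℝ) + 2 := lt_of_mul_lt_mul_right (by linarith) Real.pi_pos.le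
      have hn1 : n = (p : ℤ) + 1 := by
        have := (by exact_mod_cast h1 : (p : ℤ) < n)
        have := (by exact_mod_cast h2' : n < (p : ℤ) + 2)
        omega
      have : (n : ℝ) = (p : ℝ) + 1 := by exact_mod_cast hn1
      rw [this] at hn
      linarith
  · intro h
    right
    have : Real.sin (2 * (s + Real.arctan (s / β))) = 0 := by
      rw [h]
      have : 2 * (((p : ℝ) + 1) * π / 2) = ((p : ℝ) + 1) * π := by ring
      rw [this]
      rw [Real.sin_eq_zero_iff]
      exact ⟨(p : ℤ) + 1, by push_cast; ring⟩
    rw [Real.sin_two_mul] at this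
    linarith

theorem stmt_0 (β μ : ℝ) (hβ : 0 < β) (hμ : 0 ≤ μ) (p : ℕ) :
    ∃! lam : ℝ,
      lam ∈ Set.Ioo (μ ^ 2 + π ^ 2 * (p : ℝ) ^ 2 / 4)
        (μ ^ 2 + π ^ 2 * ((p : ℝ) + 1) ^ 2 / 4) ∧
      (β * Real.sin (Real.sqrt (lam - μ ^ 2)) +
          Real.sqrt (lam - μ ^ 2) * Real.cos (Real.sqrt (lam - μ ^ 2))) *
        (β * Real.cos (Real.sqrt (lam - μ ^ 2)) -
          Real.sqrt (lam - μ ^ 2) * Real.sin (Real.sqrt (lam - μ ^ 2))) = 0 := by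
  set a : ℝ := (p : ℝ) * π / 2 with ha
  set b : ℝ := ((p : ℝ) + 1) * π / 2 with hb
  have hab : a < b := by
    have := Real.pi_pos
    rw [ha, hb]; nlinarith
  have ha0 : 0 ≤ a := by positivity
  have hθcont : Continuous (fun s : ℝ => s + Real.arctan (s / β)) := by
    continuity
  -- IVT
  have hmem : b ∈ Set.Ioo (a + Real.arctan (a / β)) (b + Real.arctan (b / β)) := by
    constructor
    · have : Real.arctan (a / β) < π / 2 := Real.arctan_lt_pi_div_two _
      rw [ha, hb] at *; linarith
    · have hb0 : 0 < b := by
        have := Real.pi_pos; rw [hb]; positivity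
      have : 0 < Real.arctan (b / β) := by
        have := Real.arctan_strictMono (show (0:ℝ) < b / β by positivity)
        rwa [Real.arctan_zero] at this
      linarith
  obtain ⟨s, hsmem, hseq⟩ := intermediate_value_Ioo hab.le hθcont.continuousOn hmem
  have hsθ : s + Real.arctan (s / β) = b := hseq
  have hs0 : 0 < s := lt_of_le_of_lt ha0 hsmem.1
  refine ⟨μ ^ 2 + s ^ 2, ⟨⟨?_, ?_⟩, ?_⟩, ?_⟩
  · have : a ^ 2 < s ^ 2 := by nlinarith [hsmem.1]
    rw [ha] at this; nlinarith [this]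
  · have : s ^ 2 < b ^ 2 := by nlinarith [hsmem.2]
    rw [hb] at this; nlinarith [this]
  · have hss : Real.sqrt (μ ^ 2 + s ^ 2 - μ ^ 2) = s := by
      rw [show μ ^ 2 + s ^ 2 - μ ^ 2 = s ^ 2 by ring, Real.sqrt_sq hs0.le]
    rw [hss]
    exact (zero_iff β hβ p s hsmem).mpr hsθ
  · rintro lam ⟨⟨hl1, hl2⟩, hl3⟩
    set t := Real.sqrt (lam - μ ^ 2) with ht
    have hla : a ^ 2 < lam - μ ^ 2 := by
      rw [ha]; nlinarith
    have hlb : lam - μ ^ 2 < b ^ 2 := by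
      rw [hb]; nlinarith
    have hta : a < t := by
      rw [ht, ← Real.sqrt_sq ha0]
      exact Real.sqrt_lt_sqrt (by positivity) hla
    have htb : t < b := by
      rw [ht, ← Real.sqrt_sq (by linarith : (0:ℝ) ≤ b)]
      exact Real.sqrt_lt_sqrt (by nlinarith) hlb
    have hteq : t + Real.arctan (t / β) = b :=
      (zero_iff β hβ p t ⟨hta, htb⟩).mp hl3
    have hts : t = s := by
      have := theta_mono β hβ
      exact this.injective (hteq.trans hsθ.symm)
    have : lam - μ ^ 2 = t ^ 2 := by
      rw [ht, Real.sq_sqrt (by nlinarith)]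
    rw [hts] at this
    linarith
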